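/- For every real α and every a ≠ 0, the triple (a, 0, −a) (structure constants of a metric on E(1,1)) is a fixed point of the RG-2 bracket flow system if and only if αa² = 2; in particular such a steady soliton exists exactly when α > 0, with a = ±√(2/α). -/
import Mathlib


noncomputable section

/-- `Q₁ = (a₂−a₃)² − 3a₁² + 2a₁a₂ + 2a₁a₃`. -/
def Q1 (a1 a2 a3 : ℝ) : ℝ := (a2 - a3) ^ 2 - 3 * a1 ^ 2 + 2 * a1 * a2 + 2 * a1 * a3

/-- `Q₂ = (a₁−a₃)² − 3a₂² + 2a₂a₁ + 2a₂a₃`. -/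
def Q2 (a1 a2 a3 : ℝ) : ℝ := (a1 - a3) ^ 2 - 3 * a2 ^ 2 + 2 * a2 * a1 + 2 * a2 * a3

/-- `Q₃ = (a₁−a₂)² − 3a₃² + 2a₃a₁ + 2a₃a₂`. -/
def Q3 (a1 a2 a3 : ℝ) : ℝ := (a1 - a2) ^ 2 - 3 * a3 ^ 2 + 2 * a3 * a1 + 2 * a3 * a2

/-- Right-hand side of the RG-2 bracket flow for `a₁`. -/
def F1 (α a1 a2 a3 : ℝ) : ℝ := (a1 / 2) * Q1 a1 a2 a3 * (1 + (α / 8) * Q1 a1 a2 a3)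

/-- Right-hand side of the RG-2 bracket flow for `a₂`. -/
def F2 (α a1 a2 a3 : ℝ) : ℝ := (a2 / 2) * Q2 a1 a2 a3 * (1 + (α / 8) * Q2 a1 a2 a3)

/-- Right-hand side of the RG-2 bracket flow for `a₃`. -/
def F3 (α a1 a2 a3 : ℝ) : ℝ := (a3 / 2) * Q3 a1 a2 a3 * (1 + (α / 8) * Q3 a1 a2 a3)

/-- A triple of structure constants is a fixed point of the RG-2 bracket flow
(a steady algebraic soliton of the two-loop renormalization group flow). -/
def IsFixedPoint (α a1 a2 a3 : ℝ) : Prop :=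
  F1 α a1 a2 a3 = 0 ∧ F2 α a1 a2 a3 = 0 ∧ F3 α a1 a2 a3 = 0

lemma key (α a : ℝ) (ha : a ≠ 0) : IsFixedPoint α a 0 (-a) ↔ α * a ^ 2 = 2 := by
  unfold IsFixedPoint F1 F2 F3 Q1 Q2 Q3
  constructor
  · rintro ⟨h1, -, -⟩
    have h : a ^ 3 * (α * a ^ 2 - 2) = 0 := by linear_combination h1
    rcases mul_eq_zero.1 h with h' | h'
    · exact absurd h' (pow_ne_zero 3 ha)
    · linarith
  · intro h
    refine ⟨by linear_combination a ^ 3 * h, by ring, by linear_combination (-a ^ 3) * h⟩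

/-- for every `α` and `a ≠ 0`, the triple `(a,0,−a)` on `E(1,1)` is a fixed
point of the RG-2 bracket flow iff `αa² = 2`; in particular such a steady soliton exists
exactly when `α > 0`, with `a = ±√(2/α)`. -/
theorem stmt5 (α : ℝ) :
    (∀ a : ℝ, a ≠ 0 → (IsFixedPoint α a 0 (-a) ↔ α * a ^ 2 = 2)) ∧
    ((∃ a : ℝ, a ≠ 0 ∧ IsFixedPoint α a 0 (-a)) ↔ 0 < α) ∧
    (0 < α → ∀ a : ℝ, a ≠ 0 →
      (IsFixedPoint α a 0 (-a) ↔
        a = Real.sqrt (2 / α) ∨ a = -Real.sqrt (2 / α))) := by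
  refine ⟨fun a ha => key α a ha, ?_, ?_⟩
  · constructor
    · rintro ⟨a, ha, hfp⟩
      have h := (key α a ha).1 hfp
      have ha2 : 0 < a ^ 2 := by positivity
      nlinarith
    · intro hα
      have h2 : (0:ℝ) < 2 / α := by positivity
      refine ⟨Real.sqrt (2 / α), by positivity, (key α _ (by positivity)).2 ?_⟩
      rw [Real.sq_sqrt h2.le]
      field_simp
  · intro hα a ha
    rw [key α a ha]
    have hs : Real.sqrt (2 / α) ^ 2 = 2 / α := Real.sq_sqrt (by positivity)
    constructor
    · intro h
      have : a ^ 2 = Real.sqrt (2 / α) ^ 2 := by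
        rw [hs]; field_simp; linarith
      exact sq_eq_sq_iff_eq_or_eq_neg.1 this
    · rintro (rfl | rfl) <;> simp only [neg_sq, hs] <;> field_simp
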